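/- (Pisier's inequality, exponential form.) Let f : ℝⁿ → ℝ be C¹ and let X, Y be independent standard Gaussian vectors in ℝⁿ. Then for every convex g : ℝ → ℝ, E[g(f(X) − f(Y))] ≤ E[g((π/2)(∇f(X), Y))]. In particular, for every s ∈ ℝ, E[exp(s(f(X) − f(Y)))] ≤ E[exp((s²π²/8)‖∇f(X)‖²)], where the last step additionally uses that Y is independent of X and E_Y exp(λ(v,Y)) = exp(λ²‖v‖²/2). -/

import Mathlib

open MeasureTheory ProbabilityTheory
open scoped RealInnerProductSpace ENNReal

namespace PisierAux
open Real

/-- rotation on ℝ × ℝ -/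
def rot (a b : ℝ) (p : ℝ × ℝ) : ℝ × ℝ := (a * p.1 + b * p.2, b * p.1 - a * p.2)

lemma rot_invol {a b : ℝ} (hab : a ^ 2 + b ^ 2 = 1) (p : ℝ × ℝ) : rot a b (rot a b p) = p := by
  obtain ⟨x, y⟩ := p
  simp only [rot, Prod.mk.injEq]
  exact ⟨by linear_combination x * hab, by linear_combination y * hab⟩

lemma measurable_rot (a b : ℝ) : Measurable (rot a b) := by
  unfold rot; fun_prop

/-- rotation as a measurable equiv -/
noncomputable def rotE (a b : ℝ) (hab : a ^ 2 + b ^ 2 = 1) : (ℝ × ℝ) ≃ᵐ (ℝ × ℝ) where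
  toFun := rot a b
  invFun := rot a b
  left_inv := rot_invol hab
  right_inv := rot_invol hab
  measurable_toFun := measurable_rot a b
  measurable_invFun := measurable_rot a b

/-- rotation as linear map -/
noncomputable def rotL (a b : ℝ) : (ℝ × ℝ) →ₗ[ℝ] (ℝ × ℝ) :=
  LinearMap.prod (a • LinearMap.fst ℝ ℝ ℝ + b • LinearMap.snd ℝ ℝ ℝ)
    (b • LinearMap.fst ℝ ℝ ℝ - a • LinearMap.snd ℝ ℝ ℝ)

lemma rotL_det (a b : ℝ) : LinearMap.det (rotL a b) = -(a ^ 2 + b ^ 2) := by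
  rw [← LinearMap.det_toMatrix (Module.Basis.finTwoProd ℝ)]
  rw [Matrix.det_fin_two]
  simp [LinearMap.toMatrix_apply, rotL, Module.Basis.finTwoProd]
  ring

lemma rot_vol_preserving {a b : ℝ} (hab : a ^ 2 + b ^ 2 = 1) :
    MeasurePreserving (rot a b) (volume : Measure (ℝ × ℝ)) volume := by
  refine ⟨measurable_rot a b, ?_⟩
  have hdet : LinearMap.det (rotL a b) ≠ 0 := by rw [rotL_det, hab]; norm_num
  have := Measure.map_linearMap_addHaar_eq_smul_addHaar (volume : Measure (ℝ × ℝ)) hdet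
  have hcoe : ⇑(rotL a b) = rot a b := by funext p; simp [rotL, rot]
  rw [hcoe] at this
  rw [this, rotL_det, hab]
  norm_num


lemma map_withDensity_equiv {α : Type*} [MeasurableSpace α] (ν : Measure α) {ρ : α → ℝ≥0∞}
    (hρ : Measurable ρ) (T : α ≃ᵐ α) :
    Measure.map T (ν.withDensity ρ) = (Measure.map T ν).withDensity (ρ ∘ T.symm) := by
  ext s hs
  rw [Measure.map_apply T.measurable hs, withDensity_apply _ (T.measurable hs),
    withDensity_apply _ hs,
    setLIntegral_map hs (hρ.comp T.symm.measurable) T.measurable]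
  refine setLIntegral_congr_fun (T.measurable hs) (fun x _ => ?_)
  simp

noncomputable def gpdf2 : ℝ × ℝ → ℝ≥0∞ := fun p =>
  ENNReal.ofReal (gaussianPDFReal 0 1 p.1 * gaussianPDFReal 0 1 p.2)

lemma measurable_gpdf2 : Measurable gpdf2 := by
  apply Measurable.ennreal_ofReal
  exact ((measurable_gaussianPDFReal 0 1).comp measurable_fst).mul
    ((measurable_gaussianPDFReal 0 1).comp measurable_snd)

lemma gaussian_prod_eq :
    (gaussianReal 0 1).prod (gaussianReal 0 1) =
      (volume : Measure (ℝ × ℝ)).withDensity gpdf2 := by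
  refine Measure.prod_eq fun s t hs ht => ?_
  rw [withDensity_apply _ (hs.prod ht), Measure.volume_eq_prod, ← Measure.prod_restrict]
  have : ∀ p : ℝ × ℝ, gpdf2 p =
      ENNReal.ofReal (gaussianPDFReal 0 1 p.1) * ENNReal.ofReal (gaussianPDFReal 0 1 p.2) :=
    fun p => ENNReal.ofReal_mul (gaussianPDFReal_nonneg 0 1 p.1)
  simp_rw [this]
  rw [lintegral_prod_mul ((measurable_gaussianPDFReal 0 1).ennreal_ofReal).aemeasurable
    ((measurable_gaussianPDFReal 0 1).ennreal_ofReal).aemeasurable]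
  rw [gaussianReal_apply 0 one_ne_zero s, gaussianReal_apply 0 one_ne_zero t]
  rfl

lemma gpdf2_rot {a b : ℝ} (hab : a ^ 2 + b ^ 2 = 1) (p : ℝ × ℝ) :
    gpdf2 (rot a b p) = gpdf2 p := by
  obtain ⟨x, y⟩ := p
  unfold gpdf2 rot gaussianPDFReal
  congr 1
  rw [mul_mul_mul_comm, ← Real.exp_add, mul_mul_mul_comm, ← Real.exp_add]
  congr 1
  push_cast
  have h : (a * x + b * y - 0) ^ 2 + (b * x - a * y - 0) ^ 2 = (x - 0) ^ 2 + (y - 0) ^ 2 := by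
    linear_combination (x ^ 2 + y ^ 2) * hab
  field_simp
  congr 1
  linarith [h]

lemma rot_gauss_preserving {a b : ℝ} (hab : a ^ 2 + b ^ 2 = 1) :
    MeasurePreserving (rot a b) ((gaussianReal 0 1).prod (gaussianReal 0 1))
      ((gaussianReal 0 1).prod (gaussianReal 0 1)) := by
  refine ⟨measurable_rot a b, ?_⟩
  have hc : ⇑(rotE a b hab) = rot a b := rfl
  have hmap : Measure.map (⇑(rotE a b hab)) (volume : Measure (ℝ × ℝ)) = volume := by
    rw [hc]; exact (rot_vol_preserving hab).map_eq
  calc Measure.map (rot a b) ((gaussianReal 0 1).prod (gaussianReal 0 1))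
      = Measure.map (rotE a b hab) ((volume : Measure (ℝ × ℝ)).withDensity gpdf2) := by
        rw [gaussian_prod_eq]; rfl
    _ = (Measure.map (rotE a b hab) (volume : Measure (ℝ × ℝ))).withDensity
          (gpdf2 ∘ (rotE a b hab).symm) := map_withDensity_equiv _ measurable_gpdf2 _
    _ = (volume : Measure (ℝ × ℝ)).withDensity gpdf2 := by
        rw [hmap]
        congr 1
        funext p
        have h2 : (rotE a b hab).symm p = rot a b p := rfl
        simp only [Function.comp_apply, h2, gpdf2_rot hab]
    _ = (gaussianReal 0 1).prod (gaussianReal 0 1) := gaussian_prod_eq.symm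


noncomputable def piG (n : ℕ) : Measure (Fin n → ℝ) := Measure.pi fun _ => gaussianReal 0 1

instance (n : ℕ) : IsProbabilityMeasure (piG n) := by unfold piG; infer_instance

noncomputable def rotn (a b : ℝ) (n : ℕ) (p : (Fin n → ℝ) × (Fin n → ℝ)) : (Fin n → ℝ) × (Fin n → ℝ) :=
  (fun i => a * p.1 i + b * p.2 i, fun i => b * p.1 i - a * p.2 i)

lemma rotn_preserving {a b : ℝ} (hab : a ^ 2 + b ^ 2 = 1) (n : ℕ) :
    MeasurePreserving (rotn a b n) ((piG n).prod (piG n)) ((piG n).prod (piG n)) := by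
  have hφ := measurePreserving_arrowProdEquivProdArrow ℝ ℝ (Fin n)
    (fun _ => gaussianReal 0 1) (fun _ => gaussianReal 0 1)
  have hψ := measurePreserving_pi (fun _ : Fin n => (gaussianReal 0 1).prod (gaussianReal 0 1))
    (fun _ : Fin n => (gaussianReal 0 1).prod (gaussianReal 0 1))
    (fun _ => rot_gauss_preserving hab)
  have hcomp := hφ.comp (hψ.comp (hφ.symm _))
  have heq : (⇑(MeasurableEquiv.arrowProdEquivProdArrow ℝ ℝ (Fin n)) ∘
      ((fun q i => rot a b (q i)) ∘ ⇑(MeasurableEquiv.arrowProdEquivProdArrow ℝ ℝ (Fin n)).symm))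
      = rotn a b n := rfl
  rw [heq] at hcomp
  exact hcomp

noncomputable def muG (n : ℕ) : Measure (EuclideanSpace ℝ (Fin n)) :=
  Measure.map (MeasurableEquiv.toLp 2 (Fin n → ℝ)) (piG n)

instance (n : ℕ) : IsProbabilityMeasure (muG n) :=
  Measure.isProbabilityMeasure_map (MeasurableEquiv.toLp 2 (Fin n → ℝ)).measurable.aemeasurable

noncomputable def TE (n : ℕ) (a b : ℝ) (p : EuclideanSpace ℝ (Fin n) × EuclideanSpace ℝ (Fin n)) :
    EuclideanSpace ℝ (Fin n) × EuclideanSpace ℝ (Fin n) :=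
  (a • p.1 + b • p.2, b • p.1 - a • p.2)

lemma TE_preserving {a b : ℝ} (hab : a ^ 2 + b ^ 2 = 1) (n : ℕ) :
    MeasurePreserving (TE n a b) ((muG n).prod (muG n)) ((muG n).prod (muG n)) := by
  have hsm : Measurable (MeasurableEquiv.toLp 2 (Fin n → ℝ)) :=
    (MeasurableEquiv.toLp 2 (Fin n → ℝ)).measurable
  have hP : MeasurePreserving
      (Prod.map ⇑(MeasurableEquiv.toLp 2 (Fin n → ℝ))
        ⇑(MeasurableEquiv.toLp 2 (Fin n → ℝ)))
      ((piG n).prod (piG n)) ((muG n).prod (muG n)) :=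
    MeasurePreserving.prod ⟨hsm, rfl⟩ ⟨hsm, rfl⟩
  have heq : TE n a b ∘ (Prod.map ⇑(MeasurableEquiv.toLp 2 (Fin n → ℝ))
        ⇑(MeasurableEquiv.toLp 2 (Fin n → ℝ)))
      = (Prod.map ⇑(MeasurableEquiv.toLp 2 (Fin n → ℝ))
        ⇑(MeasurableEquiv.toLp 2 (Fin n → ℝ))) ∘ rotn a b n := rfl
  have hTEm : Measurable (TE n a b) := by
    unfold TE
    exact ((measurable_fst.const_smul a).add (measurable_snd.const_smul b)).prodMk
      ((measurable_fst.const_smul b).sub (measurable_snd.const_smul a))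
  refine ⟨hTEm, ?_⟩
  calc Measure.map (TE n a b) ((muG n).prod (muG n))
      = Measure.map (TE n a b)
          (Measure.map (Prod.map ⇑(MeasurableEquiv.toLp 2 (Fin n → ℝ))
            ⇑(MeasurableEquiv.toLp 2 (Fin n → ℝ))) ((piG n).prod (piG n))) := by
        rw [hP.map_eq]
    _ = Measure.map (TE n a b ∘ Prod.map ⇑(MeasurableEquiv.toLp 2 (Fin n → ℝ))
          ⇑(MeasurableEquiv.toLp 2 (Fin n → ℝ))) ((piG n).prod (piG n)) :=
        Measure.map_map hTEm hP.measurable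
    _ = Measure.map (Prod.map ⇑(MeasurableEquiv.toLp 2 (Fin n → ℝ))
          ⇑(MeasurableEquiv.toLp 2 (Fin n → ℝ)) ∘ rotn a b n) ((piG n).prod (piG n)) := by
        rw [heq]
    _ = Measure.map (Prod.map ⇑(MeasurableEquiv.toLp 2 (Fin n → ℝ))
          ⇑(MeasurableEquiv.toLp 2 (Fin n → ℝ)))
          (Measure.map (rotn a b n) ((piG n).prod (piG n))) :=
        (Measure.map_map hP.measurable (rotn_preserving hab n).measurable).symm
    _ = (muG n).prod (muG n) := by rw [(rotn_preserving hab n).map_eq, hP.map_eq]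


variable {n : ℕ}

local notation "E" => EuclideanSpace ℝ (Fin n)

lemma TE_invol {a b : ℝ} (hab : a ^ 2 + b ^ 2 = 1) (p : E × E) :
    TE n a b (TE n a b p) = p := by
  obtain ⟨x, y⟩ := p
  unfold TE
  refine Prod.ext ?_ ?_ <;> simp only
  · ext i
    simp only [PiLp.add_apply, PiLp.sub_apply, PiLp.smul_apply, smul_eq_mul]
    linear_combination (x i) * hab
  · ext i
    simp only [PiLp.add_apply, PiLp.sub_apply, PiLp.smul_apply, smul_eq_mul]
    linear_combination (y i) * hab

lemma measurable_TE (n : ℕ) (a b : ℝ) : Measurable (TE n a b) := by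
  unfold TE
  exact ((measurable_fst.const_smul a).add (measurable_snd.const_smul b)).prodMk
    ((measurable_fst.const_smul b).sub (measurable_snd.const_smul a))

noncomputable def TEE (a b : ℝ) (hab : a ^ 2 + b ^ 2 = 1) : (E × E) ≃ᵐ (E × E) where
  toFun := TE n a b
  invFun := TE n a b
  left_inv := TE_invol hab
  right_inv := TE_invol hab
  measurable_toFun := measurable_TE n a b
  measurable_invFun := measurable_TE n a b

lemma TEE_preserving {a b : ℝ} (hab : a ^ 2 + b ^ 2 = 1) :
    MeasurePreserving (⇑(TEE (n := n) a b hab)) ((muG n).prod (muG n)) ((muG n).prod (muG n)) :=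
  TE_preserving hab n

lemma gradient_continuous {f : E → ℝ} (hf : ContDiff ℝ 1 f) : Continuous (gradient f) := by
  have h : gradient f = fun x => (InnerProductSpace.toDual ℝ E).symm (fderiv ℝ f x) := rfl
  rw [h]
  exact (InnerProductSpace.toDual ℝ E).symm.continuous.comp (hf.continuous_fderiv one_ne_zero)

lemma inner_gradient {f : E → ℝ} (z v : E) : ⟪gradient f z, v⟫ = fderiv ℝ f z v :=
  InnerProductSpace.toDual_symm_apply

lemma ftc {f : E → ℝ} (hf : ContDiff ℝ 1 f) (x y : E) :
    f x - f y = ∫ θ in (0:ℝ)..(π/2),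
      ⟪gradient f (sin θ • x + cos θ • y), cos θ • x - sin θ • y⟫ := by
  have hderiv : ∀ θ : ℝ, HasDerivAt (fun t => f (sin t • x + cos t • y))
      ⟪gradient f (sin θ • x + cos θ • y), cos θ • x - sin θ • y⟫ θ := by
    intro θ
    have hc : HasDerivAt (fun t : ℝ => sin t • x + cos t • y)
        (cos θ • x - sin θ • y) θ := by
      have h1 := (Real.hasDerivAt_sin θ).smul_const x
      have h2 := (Real.hasDerivAt_cos θ).smul_const y
      simpa [sub_eq_add_neg, neg_smul] using h1.fun_add h2
    have hd := ((hf.differentiable one_ne_zero) _).hasFDerivAt.comp_hasDerivAt θ hc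
    rw [inner_gradient]
    exact hd
  have hcont : Continuous fun θ : ℝ =>
      ⟪gradient f (sin θ • x + cos θ • y), cos θ • x - sin θ • y⟫ := by
    apply Continuous.inner
    · exact (gradient_continuous hf).comp
        ((continuous_sin.smul continuous_const).add (continuous_cos.smul continuous_const))
    · exact (continuous_cos.smul continuous_const).sub (continuous_sin.smul continuous_const)
  rw [intervalIntegral.integral_eq_sub_of_hasDerivAt (fun θ _ => hderiv θ)
    (hcont.intervalIntegrable _ _)]
  simp

lemma jensen_avg {g : ℝ → ℝ} (hg : ConvexOn ℝ Set.univ g) (hgc : Continuous g)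
    {u : ℝ → ℝ} (hu : Continuous u) :
    g (∫ θ in (0:ℝ)..(π/2), u θ) ≤ (2/π) * ∫ θ in (0:ℝ)..(π/2), g (π/2 * u θ) := by
  set ν : Measure ℝ := volume.restrict (Set.Ioc 0 (π/2)) with hν
  have hπ : (0:ℝ) < π/2 := by positivity
  have hνuniv : ν Set.univ = ENNReal.ofReal (π/2) := by
    rw [hν, Measure.restrict_apply_univ, Real.volume_Ioc, sub_zero]
  haveI : IsFiniteMeasure ν := ⟨by rw [hνuniv]; exact ENNReal.ofReal_lt_top⟩
  haveI : NeZero ν := by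
    refine ⟨fun h0 => ?_⟩
    rw [h0] at hνuniv
    simp only [Measure.coe_zero, Pi.zero_apply] at hνuniv
    rw [eq_comm, ENNReal.ofReal_eq_zero] at hνuniv
    linarith
  have hui : Integrable (fun θ => π/2 * u θ) ν :=
    ((continuous_const.mul hu).integrableOn_Ioc (a := 0) (b := π/2))
  have hgi : Integrable (fun θ => g (π/2 * u θ)) ν :=
    ((hgc.comp (continuous_const.mul hu)).integrableOn_Ioc (a := 0) (b := π/2))
  have hJ := hg.map_average_le hgc.continuousOn isClosed_univ
    (Filter.Eventually.of_forall fun θ => Set.mem_univ _) hui hgi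
  rw [average_eq, average_eq, measureReal_def, hνuniv, ENNReal.toReal_ofReal hπ.le] at hJ
  have h1 : ∫ θ, π/2 * u θ ∂ν = π/2 * ∫ θ in (0:ℝ)..(π/2), u θ := by
    rw [intervalIntegral.integral_of_le hπ.le, integral_const_mul]
  have h2 : ∫ θ, g (π/2 * u θ) ∂ν = ∫ θ in (0:ℝ)..(π/2), g (π/2 * u θ) := by
    rw [intervalIntegral.integral_of_le hπ.le]
  rw [h1, h2] at hJ
  have hπne : π ≠ 0 := Real.pi_ne_zero
  have : (π/2)⁻¹ • (π/2 * ∫ θ in (0:ℝ)..(π/2), u θ) = ∫ θ in (0:ℝ)..(π/2), u θ := by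
    rw [smul_eq_mul, ← mul_assoc, inv_mul_cancel₀ (by positivity), one_mul]
  rw [this] at hJ
  calc g (∫ θ in (0:ℝ)..(π/2), u θ) ≤ (π/2)⁻¹ • ∫ θ in (0:ℝ)..(π/2), g (π/2 * u θ) := hJ
    _ = (2/π) * ∫ θ in (0:ℝ)..(π/2), g (π/2 * u θ) := by
        rw [smul_eq_mul, inv_div]


lemma gaussian_mgf_pointwise (c t : ℝ) :
    gaussianPDFReal 0 1 t * Real.exp (c * t) = Real.exp (c ^ 2 / 2) * gaussianPDFReal c 1 t := by
  unfold gaussianPDFReal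
  rw [mul_assoc, ← Real.exp_add, mul_left_comm, ← Real.exp_add]
  push_cast
  congr 2
  ring

lemma lintegral_exp_gaussian (c : ℝ) :
    ∫⁻ t, ENNReal.ofReal (Real.exp (c * t)) ∂(gaussianReal 0 1)
      = ENNReal.ofReal (Real.exp (c ^ 2 / 2)) := by
  rw [gaussianReal_of_var_ne_zero 0 one_ne_zero,
    lintegral_withDensity_eq_lintegral_mul _ (measurable_gaussianPDF 0 1)
      (by fun_prop)]
  have heq : ∀ t : ℝ, (gaussianPDF 0 1 * fun t => ENNReal.ofReal (Real.exp (c * t))) t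
      = ENNReal.ofReal (Real.exp (c ^ 2 / 2)) * ENNReal.ofReal (gaussianPDFReal c 1 t) := by
    intro t
    simp only [Pi.mul_apply, gaussianPDF]
    rw [← ENNReal.ofReal_mul (gaussianPDFReal_nonneg 0 1 t), gaussian_mgf_pointwise c t,
      ENNReal.ofReal_mul (Real.exp_pos _).le]
  simp_rw [heq]
  rw [lintegral_const_mul _ (measurable_gaussianPDFReal c 1).ennreal_ofReal,
    lintegral_gaussianPDFReal_eq_one c one_ne_zero, mul_one]

lemma lintegral_pi_fin_prod : ∀ (n : ℕ) (h : Fin n → ℝ → ℝ≥0∞), (∀ i, Measurable (h i)) →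
    ∫⁻ q : Fin n → ℝ, ∏ i, h i (q i) ∂(Measure.pi fun _ => gaussianReal 0 1)
      = ∏ i, ∫⁻ t, h i t ∂(gaussianReal 0 1) := by
  intro n
  induction n with
  | zero =>
      intro h _
      simp [lintegral_const]
  | succ m ih =>
      intro h hm
      have hmp := (measurePreserving_piFinSuccAbove (fun _ : Fin (m+1) => gaussianReal 0 1) 0).symm
      rw [← hmp.lintegral_comp (f := fun q : Fin (m+1) → ℝ => ∏ i, h i (q i))
        (by exact Finset.measurable_prod _ fun i _ => (hm i).comp (measurable_pi_apply i))]
      have hpt : ∀ p : ℝ × (Fin m → ℝ),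
          (∏ i, h i (((MeasurableEquiv.piFinSuccAbove (fun _ => ℝ) 0).symm p) i))
            = h 0 p.1 * ∏ j : Fin m, h j.succ (p.2 j) := by
        intro p
        rw [Fin.prod_univ_succ]
        simp [MeasurableEquiv.piFinSuccAbove_symm_apply, Fin.insertNthEquiv,
          Fin.insertNth_zero, Fin.zero_succAbove]
      simp_rw [hpt]
      rw [lintegral_prod_mul (f := h 0) (g := fun q : Fin m → ℝ => ∏ j : Fin m, h j.succ (q j))
        (hm 0).aemeasurable
        (Finset.measurable_prod _ fun j _ => (hm j.succ).comp (measurable_pi_apply j)).aemeasurable]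
      rw [ih (fun j => h j.succ) (fun j => hm j.succ), Fin.prod_univ_succ]

lemma lintegral_exp_inner (n : ℕ) (w : EuclideanSpace ℝ (Fin n)) :
    ∫⁻ y, ENNReal.ofReal (Real.exp ⟪w, y⟫)
        ∂(Measure.map (MeasurableEquiv.toLp 2 (Fin n → ℝ))
          (Measure.pi fun _ : Fin n => gaussianReal 0 1))
      = ENNReal.ofReal (Real.exp (‖w‖ ^ 2 / 2)) := by
  have hfm : Measurable fun y : EuclideanSpace ℝ (Fin n) => ENNReal.ofReal (Real.exp ⟪w, y⟫) :=
    (Real.continuous_exp.comp (continuous_const.inner continuous_id)).measurable.ennreal_ofReal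
  rw [lintegral_map hfm (MeasurableEquiv.toLp 2 (Fin n → ℝ)).measurable]
  have hpt : ∀ q : Fin n → ℝ,
      ENNReal.ofReal (Real.exp ⟪w, (MeasurableEquiv.toLp 2 (Fin n → ℝ)) q⟫)
        = ∏ i, ENNReal.ofReal (Real.exp (w i * q i)) := by
    intro q
    have h1 : ⟪w, (MeasurableEquiv.toLp 2 (Fin n → ℝ)) q⟫ = ∑ i, w i * q i := by
      rw [PiLp.inner_apply]
      exact Finset.sum_congr rfl fun i _ => by simp [mul_comm]
    rw [h1, Real.exp_sum, ← ENNReal.ofReal_prod_of_nonneg (fun i _ => (Real.exp_pos _).le)]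
  simp_rw [hpt]
  rw [lintegral_pi_fin_prod n (fun i t => ENNReal.ofReal (Real.exp (w i * t))) (fun i => (Real.measurable_exp.comp (measurable_id'.const_mul (w i))).ennreal_ofReal)]
  have : ∀ i : Fin n, ∫⁻ t, ENNReal.ofReal (Real.exp (w i * t)) ∂(gaussianReal 0 1)
      = ENNReal.ofReal (Real.exp ((w i) ^ 2 / 2)) := fun i => lintegral_exp_gaussian (w i)
  simp_rw [this]
  rw [← ENNReal.ofReal_prod_of_nonneg (fun i _ => (Real.exp_pos _).le), ← Real.exp_sum]
  congr 2
  rw [← Finset.sum_div]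
  congr 1
  have := real_inner_self_eq_norm_sq w
  rw [← this, PiLp.inner_apply]
  refine Finset.sum_congr rfl fun i _ => ?_
  simp [RCLike.inner_apply, sq]


noncomputable def Phi (f : E → ℝ) (θ : ℝ) (p : E × E) : ℝ :=
  π/2 * ⟪gradient f (sin θ • p.1 + cos θ • p.2), cos θ • p.1 - sin θ • p.2⟫

noncomputable def HH (f : E → ℝ) (p : E × E) : ℝ := π/2 * ⟪gradient f p.1, p.2⟫

lemma Phi_cont {f : E → ℝ} (hf : ContDiff ℝ 1 f) :
    Continuous fun q : ℝ × (E × E) => Phi f q.1 q.2 := by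
  apply continuous_const.mul
  apply Continuous.inner
  · exact (gradient_continuous hf).comp
      (((continuous_sin.comp continuous_fst).smul (continuous_fst.comp continuous_snd)).add
        ((continuous_cos.comp continuous_fst).smul (continuous_snd.comp continuous_snd)))
  · exact ((continuous_cos.comp continuous_fst).smul (continuous_fst.comp continuous_snd)).sub
      ((continuous_sin.comp continuous_fst).smul (continuous_snd.comp continuous_snd))

lemma HH_cont {f : E → ℝ} (hf : ContDiff ℝ 1 f) : Continuous (HH f) :=
  continuous_const.mul (Continuous.inner ((gradient_continuous hf).comp continuous_fst)
    continuous_snd)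

lemma pointwise_bound {f : E → ℝ} (hf : ContDiff ℝ 1 f) {g : ℝ → ℝ}
    (hg : ConvexOn ℝ Set.univ g) (hgc : Continuous g) (p : E × E) :
    g (f p.1 - f p.2) ≤ (2/π) * ∫ θ in (0:ℝ)..(π/2), g (Phi f θ p) := by
  have hu : Continuous fun θ : ℝ => ⟪gradient f (sin θ • p.1 + cos θ • p.2),
      cos θ • p.1 - sin θ • p.2⟫ := by
    apply Continuous.inner
    · exact (gradient_continuous hf).comp
        ((continuous_sin.smul continuous_const).add (continuous_cos.smul continuous_const))
    · exact (continuous_cos.smul continuous_const).sub (continuous_sin.smul continuous_const)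
  have h := jensen_avg hg hgc hu
  rw [← ftc hf p.1 p.2] at h
  exact h

lemma lintegral_phi_nnorm {f : E → ℝ} (hf : ContDiff ℝ 1 f) {g : ℝ → ℝ} (hgc : Continuous g)
    (θ : ℝ) :
    ∫⁻ p, (‖g (Phi f θ p)‖₊ : ℝ≥0∞) ∂((muG n).prod (muG n))
      = ∫⁻ p, (‖g (HH f p)‖₊ : ℝ≥0∞) ∂((muG n).prod (muG n)) := by
  have hm : Measurable fun p : E × E => (‖g (HH f p)‖₊ : ℝ≥0∞) :=
    (hgc.comp (HH_cont hf)).measurable.nnnorm.coe_nnreal_ennreal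
  exact (TEE_preserving (sin_sq_add_cos_sq θ)).lintegral_comp (f := fun p => (‖g (HH f p)‖₊ : ℝ≥0∞)) hm

lemma integral_phi {f : E → ℝ} (hf : ContDiff ℝ 1 f) (g : ℝ → ℝ) (θ : ℝ) :
    ∫ p, g (Phi f θ p) ∂((muG n).prod (muG n))
      = ∫ p, g (HH f p) ∂((muG n).prod (muG n)) :=
  (TEE_preserving (sin_sq_add_cos_sq θ)).integral_comp' (fun p => g (HH f p))

lemma psi_integrable {f : E → ℝ} (hf : ContDiff ℝ 1 f) {g : ℝ → ℝ} (hgc : Continuous g)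
    (hint2 : Integrable (fun p : E × E => g (HH f p)) ((muG n).prod (muG n))) :
    Integrable (fun q : ℝ × (E × E) => g (Phi f q.1 q.2))
      ((volume.restrict (Set.Ioc 0 (π/2))).prod ((muG n).prod (muG n))) := by
  constructor
  · exact (hgc.comp (Phi_cont hf)).aestronglyMeasurable
  · rw [HasFiniteIntegral]
    change ∫⁻ q : ℝ × (E × E), (‖g (Phi f q.1 q.2)‖₊ : ℝ≥0∞) ∂((volume.restrict (Set.Ioc 0 (π/2))).prod ((muG n).prod (muG n))) < ⊤
    have hm : Measurable fun q : ℝ × (E × E) => (‖g (Phi f q.1 q.2)‖₊ : ℝ≥0∞) :=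
      (hgc.comp (Phi_cont hf)).measurable.nnnorm.coe_nnreal_ennreal
    rw [lintegral_prod (fun q : ℝ × (E × E) => (‖g (Phi f q.1 q.2)‖₊ : ℝ≥0∞)) hm.aemeasurable]
    have hC : ∀ θ : ℝ, ∫⁻ p, (‖g (Phi f θ p)‖₊ : ℝ≥0∞) ∂((muG n).prod (muG n))
        = ∫⁻ p, (‖g (HH f p)‖₊ : ℝ≥0∞) ∂((muG n).prod (muG n)) := lintegral_phi_nnorm hf hgc
    simp_rw [hC]
    rw [lintegral_const]
    have h1 : (∫⁻ p, (‖g (HH f p)‖₊ : ℝ≥0∞) ∂((muG n).prod (muG n))) < ⊤ :=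
      hint2.hasFiniteIntegral
    have h2 : (volume.restrict (Set.Ioc 0 (π/2))) Set.univ < ⊤ := by
      rw [Measure.restrict_apply_univ, Real.volume_Ioc]
      exact ENNReal.ofReal_lt_top
    exact ENNReal.mul_lt_top h1 h2

lemma part1 (f : E → ℝ) (hf : ContDiff ℝ 1 f) (g : ℝ → ℝ) (hg : ConvexOn ℝ Set.univ g)
    (hint1 : Integrable (fun p : E × E => g (f p.1 - f p.2)) ((muG n).prod (muG n)))
    (hint2 : Integrable (fun p : E × E => g (π / 2 * ⟪gradient f p.1, p.2⟫))
      ((muG n).prod (muG n))) :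
    (∫ p, g (f p.1 - f p.2) ∂((muG n).prod (muG n)))
      ≤ ∫ p, g (π / 2 * ⟪gradient f p.1, p.2⟫) ∂((muG n).prod (muG n)) := by
  have hgc : Continuous g := by
    rw [← continuousOn_univ]
    exact hg.continuousOn isOpen_univ
  have hπ2 : (0:ℝ) < π/2 := by positivity
  set ν : Measure ℝ := volume.restrict (Set.Ioc 0 (π/2)) with hν
  set μ2 : Measure (E × E) := (muG n).prod (muG n) with hμ2
  have hint2' : Integrable (fun p : E × E => g (HH f p)) μ2 := hint2
  have hΨ : Integrable (fun q : ℝ × (E × E) => g (Phi f q.1 q.2)) (ν.prod μ2) :=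
    psi_integrable hf hgc hint2'
  have hRHSint : Integrable (fun p : E × E => ∫ θ, g (Phi f θ p) ∂ν) μ2 :=
    hΨ.integral_prod_right
  have hνuniv : ν Set.univ = ENNReal.ofReal (π/2) := by
    rw [hν, Measure.restrict_apply_univ, Real.volume_Ioc, sub_zero]
  calc ∫ p, g (f p.1 - f p.2) ∂μ2
      ≤ ∫ p, (2/π) * ∫ θ, g (Phi f θ p) ∂ν ∂μ2 := by
        refine integral_mono hint1 (hRHSint.const_mul _) fun p => ?_
        have h := pointwise_bound hf hg hgc p
        rwa [intervalIntegral.integral_of_le hπ2.le] at h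
    _ = (2/π) * ∫ p, ∫ θ, g (Phi f θ p) ∂ν ∂μ2 := integral_const_mul _ _
    _ = (2/π) * ∫ θ, ∫ p, g (Phi f θ p) ∂μ2 ∂ν := by
        congr 1
        exact (integral_integral_swap (f := fun θ p => g (Phi f θ p)) hΨ).symm
    _ = (2/π) * ∫ θ, (∫ p, g (HH f p) ∂μ2) ∂ν := by
        congr 1
        exact integral_congr_ae (Filter.Eventually.of_forall fun θ => integral_phi hf g θ)
    _ = (2/π) * ((π/2) * ∫ p, g (HH f p) ∂μ2) := by
        rw [integral_const, measureReal_def, hνuniv, ENNReal.toReal_ofReal hπ2.le, smul_eq_mul]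
    _ = ∫ p, g (HH f p) ∂μ2 := by
        have hπne : π ≠ 0 := Real.pi_ne_zero
        field_simp

lemma part2 (f : E → ℝ) (hf : ContDiff ℝ 1 f) (s : ℝ) :
    (∫⁻ p, ENNReal.ofReal (Real.exp (s * (f p.1 - f p.2))) ∂((muG n).prod (muG n)))
      ≤ ∫⁻ p, ENNReal.ofReal
          (Real.exp (s ^ 2 * π ^ 2 / 8 * ‖gradient f p.1‖ ^ 2)) ∂((muG n).prod (muG n)) := by
  have hπ2 : (0:ℝ) < π/2 := by positivity
  set ν : Measure ℝ := volume.restrict (Set.Ioc 0 (π/2)) with hν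
  set μ2 : Measure (E × E) := (muG n).prod (muG n) with hμ2
  have hνuniv : ν Set.univ = ENNReal.ofReal (π/2) := by
    rw [hν, Measure.restrict_apply_univ, Real.volume_Ioc, sub_zero]
  have hgc : Continuous fun x : ℝ => Real.exp (s * x) :=
    Real.continuous_exp.comp (continuous_const.mul continuous_id)
  have hconv : ConvexOn ℝ Set.univ fun x : ℝ => Real.exp (s * x) := by
    have h := convexOn_exp.comp_affineMap
      (LinearMap.toAffineMap (s • (LinearMap.id : ℝ →ₗ[ℝ] ℝ)))
    simpa [Function.comp_def] using h
  have hθint : ∀ p : E × E, Integrable (fun θ => Real.exp (s * Phi f θ p)) ν := fun p =>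
    ((hgc.comp ((Phi_cont hf).comp (continuous_id.prodMk continuous_const))).integrableOn_Ioc)
  have hjointc : Continuous fun q : ℝ × (E × E) => Real.exp (s * Phi f q.1 q.2) :=
    hgc.comp (Phi_cont hf)
  have hHc : Continuous fun p : E × E => Real.exp (s * HH f p) := hgc.comp (HH_cont hf)
  calc ∫⁻ p, ENNReal.ofReal (Real.exp (s * (f p.1 - f p.2))) ∂μ2
      ≤ ∫⁻ p, ENNReal.ofReal ((2/π) * ∫ θ in (0:ℝ)..(π/2), Real.exp (s * Phi f θ p)) ∂μ2 :=
        lintegral_mono fun p => ENNReal.ofReal_le_ofReal (pointwise_bound hf hconv hgc p)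
    _ = ∫⁻ p, ENNReal.ofReal (2/π) * ∫⁻ θ, ENNReal.ofReal (Real.exp (s * Phi f θ p)) ∂ν ∂μ2 := by
        refine lintegral_congr fun p => ?_
        rw [intervalIntegral.integral_of_le hπ2.le, ENNReal.ofReal_mul (by positivity),
          ofReal_integral_eq_lintegral_ofReal (hθint p)
            (Filter.Eventually.of_forall fun θ => (Real.exp_pos _).le)]
    _ = ENNReal.ofReal (2/π) * ∫⁻ p, ∫⁻ θ, ENNReal.ofReal (Real.exp (s * Phi f θ p)) ∂ν ∂μ2 :=
        lintegral_const_mul _ ((hjointc.measurable.ennreal_ofReal).lintegral_prod_left')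
    _ = ENNReal.ofReal (2/π) * ∫⁻ θ, ∫⁻ p, ENNReal.ofReal (Real.exp (s * Phi f θ p)) ∂μ2 ∂ν := by
        congr 1
        have hswap : AEMeasurable (Function.uncurry fun (p : E × E) (θ : ℝ) =>
            ENNReal.ofReal (Real.exp (s * Phi f θ p))) (μ2.prod ν) :=
          (hjointc.measurable.ennreal_ofReal.comp measurable_swap).aemeasurable
        exact lintegral_lintegral_swap hswap
    _ = ENNReal.ofReal (2/π) * ∫⁻ θ, (∫⁻ p, ENNReal.ofReal (Real.exp (s * HH f p)) ∂μ2) ∂ν := by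
        congr 1
        refine lintegral_congr fun θ => ?_
        exact (TEE_preserving (sin_sq_add_cos_sq θ)).lintegral_comp
          (f := fun p => ENNReal.ofReal (Real.exp (s * HH f p)))
          (hHc.measurable.ennreal_ofReal)
    _ = ∫⁻ p, ENNReal.ofReal (Real.exp (s * HH f p)) ∂μ2 := by
        rw [lintegral_const, hνuniv, mul_comm (∫⁻ p, ENNReal.ofReal (Real.exp (s * HH f p)) ∂μ2),
          ← mul_assoc, ← ENNReal.ofReal_mul (by positivity)]
        have : 2/π * (π/2) = 1 := by field_simp
        rw [this, ENNReal.ofReal_one, one_mul]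
    _ = ∫⁻ x, ∫⁻ y, ENNReal.ofReal (Real.exp ⟪(s * (π/2)) • gradient f x, y⟫)
          ∂(muG n) ∂(muG n) := by
        rw [hμ2, lintegral_prod _ ?_]
        · refine lintegral_congr fun x => lintegral_congr fun y => ?_
          congr 2
          rw [real_inner_smul_left]
          show s * (π/2 * ⟪gradient f x, y⟫) = s * (π/2) * ⟪gradient f x, y⟫
          ring
        · exact (hHc.measurable.ennreal_ofReal).aemeasurable
    _ = ∫⁻ x, ENNReal.ofReal (Real.exp (‖(s * (π/2)) • gradient f x‖ ^ 2 / 2)) ∂(muG n) := by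
        refine lintegral_congr fun x => ?_
        exact lintegral_exp_inner n _
    _ = ∫⁻ x, ENNReal.ofReal (Real.exp (s ^ 2 * π ^ 2 / 8 * ‖gradient f x‖ ^ 2)) ∂(muG n) := by
        refine lintegral_congr fun x => ?_
        congr 2
        rw [norm_smul, mul_pow, Real.norm_eq_abs, sq_abs]
        ring
    _ = ∫⁻ p, ENNReal.ofReal (Real.exp (s ^ 2 * π ^ 2 / 8 * ‖gradient f p.1‖ ^ 2)) ∂μ2 := by
        have hm : Measurable fun p : E × E =>
            ENNReal.ofReal (Real.exp (s ^ 2 * π ^ 2 / 8 * ‖gradient f p.1‖ ^ 2)) :=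
          (Real.continuous_exp.comp (continuous_const.mul
            (((gradient_continuous hf).comp continuous_fst).norm.pow 2))).measurable.ennreal_ofReal
        rw [hμ2, lintegral_prod _ hm.aemeasurable]
        refine (lintegral_congr fun x => ?_)
        simp

end PisierAux

open MeasureTheory ProbabilityTheory
open scoped RealInnerProductSpace

/-- Pisier's inequality, exponential form: For `f : ℝⁿ → ℝ` of class `C¹`
and `X, Y` independent standard Gaussian vectors in `ℝⁿ`: for every convex `g : ℝ → ℝ`
(with both integrands integrable), `E[g(f(X) − f(Y))] ≤ E[g((π/2)⟪∇f(X), Y⟫)]`; and for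
every `s ∈ ℝ`, `E[exp(s(f(X) − f(Y)))] ≤ E[exp((s²π²/8)‖∇f(X)‖²)]`. -/
theorem pisier_inequality
    (n : ℕ) (f : EuclideanSpace ℝ (Fin n) → ℝ) (hf : ContDiff ℝ 1 f)
    (μ : Measure (EuclideanSpace ℝ (Fin n)))
    (hμ : μ = Measure.map (MeasurableEquiv.toLp 2 (Fin n → ℝ))
      (Measure.pi fun _ : Fin n => gaussianReal 0 1)) :
    (∀ g : ℝ → ℝ, ConvexOn ℝ Set.univ g →
      Integrable (fun p : EuclideanSpace ℝ (Fin n) × EuclideanSpace ℝ (Fin n) =>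
        g (f p.1 - f p.2)) (μ.prod μ) →
      Integrable (fun p : EuclideanSpace ℝ (Fin n) × EuclideanSpace ℝ (Fin n) =>
        g (Real.pi / 2 * ⟪gradient f p.1, p.2⟫)) (μ.prod μ) →
      (∫ p, g (f p.1 - f p.2) ∂(μ.prod μ))
        ≤ ∫ p, g (Real.pi / 2 * ⟪gradient f p.1, p.2⟫) ∂(μ.prod μ)) ∧
    (∀ s : ℝ,
      (∫⁻ p, ENNReal.ofReal (Real.exp (s * (f p.1 - f p.2))) ∂(μ.prod μ))
        ≤ ∫⁻ p, ENNReal.ofReal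
            (Real.exp (s ^ 2 * Real.pi ^ 2 / 8 * ‖gradient f p.1‖ ^ 2)) ∂(μ.prod μ)) := by
  have hμ' : μ = PisierAux.muG n := hμ
  subst hμ'
  exact ⟨fun g hg h1 h2 => PisierAux.part1 f hf g hg h1 h2, fun s => PisierAux.part2 f hf s⟩
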